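/- For every constant α > 0 there exists a constant β > 0 such that the following holds for any edge probability q with 0 ≤ q ≤ 2/d. Whp there is no vertex set W ⊆ V(Q^d) with |W| ≥ α·n such that W spans at most β·d·|W| edges in Q^d and W spans at least |W|/2 edges in the random subgraph Q^d_q. -/

import Mathlib

open MeasureTheory Filter
open scoped ENNReal

noncomputable section

/-- The `d`-dimensional hypercube graph `Q^d`, on vertex set `{0,1}^d`. -/
def cubeGraph (d : ℕ) : SimpleGraph (Fin d → Bool) where
  Adj x y := hammingDist x y = 1
  symm := ⟨fun x y h => by show hammingDist y x = 1; rw [hammingDist_comm]; exact h⟩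
  loopless := ⟨fun x h => by simp [hammingDist_self] at h⟩

/-- The spanning subgraph of `G` consisting of those edges `e` with `ω e = true`. -/
def percolate {V : Type*} (G : SimpleGraph V) (ω : Sym2 V → Bool) : SimpleGraph V where
  Adj x y := G.Adj x y ∧ ω s(x, y) = true
  symm := ⟨by
    rintro x y ⟨h1, h2⟩
    exact ⟨h1.symm, by rwa [Sym2.eq_swap]⟩⟩
  loopless := ⟨fun x h => G.loopless.irrefl x h.1⟩

/-- The Bernoulli measure on `Bool` with success probability `p` (truncated to `[0,1]`). -/
def bernoulliBool (p : ℝ) : Measure Bool :=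
  (PMF.bernoulli (min (Real.toNNReal p) 1) (min_le_right _ _)).toMeasure

instance (p : ℝ) : IsProbabilityMeasure (bernoulliBool p) := by
  unfold bernoulliBool; infer_instance

/-- The probability measure on edge-configurations of the `d`-dimensional hypercube in which
each potential edge is retained independently with probability `p`; the configuration space
is `Sym2 (Fin d → Bool) → Bool`, and `Q^d_p` is `percolate (cubeGraph d) ω`. -/
def cubeMeasure (d : ℕ) (p : ℝ) : Measure (Sym2 (Fin d → Bool) → Bool) :=
  Measure.pi fun _ => bernoulliBool p

/-- `C` is a largest connected component of `H`. -/
def IsLargestComponent {V : Type*} [Fintype V] (H : SimpleGraph V)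
    (C : H.ConnectedComponent) : Prop :=
  ∀ C' : H.ConnectedComponent, C'.supp.ncard ≤ C.supp.ncard

/-- The edge boundary of the vertex set `S` in the graph `H`: the set of edges of `H` with
exactly one endpoint in `S`. -/
def edgeBoundary {V : Type*} (H : SimpleGraph V) (S : Set V) : Set (Sym2 V) :=
  {e | e ∈ H.edgeSet ∧ ∃ x y, e = s(x, y) ∧ x ∈ S ∧ y ∉ S}

/-- The vertex boundary of the vertex set `S` in the graph `H`: the set of vertices outside
`S` having a neighbour in `S`. -/
def vertexBoundary {V : Type*} (H : SimpleGraph V) (S : Set V) : Set V :=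
  {v | v ∉ S ∧ ∃ u ∈ S, H.Adj u v}

/-- The survival probability of a Galton–Watson branching process with Poisson(`c`) offspring
distribution: one minus the extinction probability, the extinction probability being the least
fixed point in `[0,1]` of the probability generating function `s ↦ exp (c * (s - 1))` of the
Poisson(`c`) distribution. -/
def poissonSurvival (c : ℝ) : ℝ :=
  1 - sInf {s : ℝ | s ∈ Set.Icc (0 : ℝ) 1 ∧ Real.exp (c * (s - 1)) = s}

/-- `H` contains a complete minor of order `t`: there are `t` pairwise disjoint connected
branch sets with an edge of `H` between any two of them. -/
def HasCompleteMinor {V : Type*} (H : SimpleGraph V) (t : ℕ) : Prop :=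
  ∃ B : Fin t → Set V,
    (∀ i, (H.induce (B i)).Connected) ∧
    (Pairwise fun i j => Disjoint (B i) (B j)) ∧
    (∀ i j, i ≠ j → ∃ x ∈ B i, ∃ y ∈ B j, H.Adj x y)

lemma cubeMeasure_cylinder {d : ℕ} {p : ℝ} (hp1 : p ≤ 1)
    (T : Finset (Sym2 (Fin d → Bool))) :
    cubeMeasure d p {ω | ∀ e ∈ T, ω e = true} = ENNReal.ofReal p ^ T.card := by
  classical
  have hset : {ω : Sym2 (Fin d → Bool) → Bool | ∀ e ∈ T, ω e = true}
      = Set.pi Set.univ (fun e => if e ∈ T then {true} else Set.univ) := by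
    ext ω
    simp only [Set.mem_setOf_eq, Set.mem_pi, Set.mem_univ, true_implies]
    constructor
    · intro h e; split_ifs with he
      · simpa using h e he
      · trivial
    · intro h e he
      have := h e; rw [if_pos he] at this; simpa using this
  have hber : bernoulliBool p {true} = ENNReal.ofReal p := by
    rw [bernoulliBool, PMF.toMeasure_apply_singleton _ _ (measurableSet_singleton _)]
    simp [PMF.bernoulli_apply, min_eq_left (Real.toNNReal_le_one.2 hp1), ENNReal.ofReal]
  rw [cubeMeasure, hset, Measure.pi_pi]
  calc (∏ e : Sym2 (Fin d → Bool), bernoulliBool p (if e ∈ T then {true} else Set.univ))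
      = ∏ e : Sym2 (Fin d → Bool), (if e ∈ T then ENNReal.ofReal p else 1) := by
        refine Finset.prod_congr rfl fun e _ => ?_
        split_ifs with he
        · exact hber
        · exact measure_univ
    _ = ∏ _e ∈ T, ENNReal.ofReal p := Fintype.prod_ite_mem T _
    _ = ENNReal.ofReal p ^ T.card := Finset.prod_const _

lemma union_bound {d : ℕ} {p : ℝ} (hp1 : p ≤ 1) (F : Finset (Sym2 (Fin d → Bool))) (k : ℕ) :
    cubeMeasure d p {ω | k ≤ (F.filter (fun e => ω e = true)).card}
      ≤ (F.card.choose k : ℝ≥0∞) * ENNReal.ofReal p ^ k := by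
  classical
  have hsub : {ω : Sym2 (Fin d → Bool) → Bool | k ≤ (F.filter (fun e => ω e = true)).card}
      ⊆ ⋃ T ∈ F.powersetCard k, {ω | ∀ e ∈ T, ω e = true} := by
    intro ω hω
    obtain ⟨T, hT, hTc⟩ := Finset.exists_subset_card_eq hω
    refine Set.mem_iUnion₂.2 ⟨T, Finset.mem_powersetCard.2
      ⟨hT.trans (Finset.filter_subset _ _), hTc⟩, fun e he => ?_⟩
    exact (Finset.mem_filter.1 (hT he)).2
  calc cubeMeasure d p {ω | k ≤ (F.filter (fun e => ω e = true)).card}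
      ≤ ∑ T ∈ F.powersetCard k, cubeMeasure d p {ω | ∀ e ∈ T, ω e = true} :=
        (measure_mono hsub).trans (measure_biUnion_finset_le _ _)
    _ = ∑ _T ∈ F.powersetCard k, ENNReal.ofReal p ^ k := by
        refine Finset.sum_congr rfl fun T hT => ?_
        rw [cubeMeasure_cylinder hp1, (Finset.mem_powersetCard.1 hT).2]
    _ = (F.card.choose k : ℝ≥0∞) * ENNReal.ofReal p ^ k := by
        rw [Finset.sum_const, Finset.card_powersetCard, nsmul_eq_mul]

lemma real_bound {m k : ℕ} {q c : ℝ} (hq0 : 0 ≤ q) (hc : 0 ≤ c)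
    (hmq : (m : ℝ) * q ≤ c * k) :
    (m.choose k : ℝ) * q ^ k ≤ (c * Real.exp 1) ^ k := by
  have hk : (0:ℝ) ≤ (m:ℝ) * q := by positivity
  calc (m.choose k : ℝ) * q ^ k ≤ ((m : ℝ) ^ k / k.factorial) * q ^ k := by
        exact mul_le_mul_of_nonneg_right (Nat.choose_le_pow_div k m) (by positivity)
    _ = ((m : ℝ) * q) ^ k / k.factorial := by rw [mul_pow]; ring
    _ ≤ (c * k) ^ k / k.factorial := by
        have := pow_le_pow_left₀ hk hmq k
        gcongr
    _ = c ^ k * ((k : ℝ) ^ k / k.factorial) := by rw [mul_pow]; ring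
    _ ≤ c ^ k * Real.exp k := by
        have := Real.pow_div_factorial_le_exp (x := (k:ℝ)) (Nat.cast_nonneg k) k
        gcongr
    _ = (c * Real.exp 1) ^ k := by
        rw [mul_pow, ← Real.exp_nat_mul]; norm_num

/-- membership in percolated edge set -/
lemma percolate_mem_edgeSet {V : Type*} (G : SimpleGraph V) (ω : Sym2 V → Bool)
    (e : Sym2 V) : e ∈ (percolate G ω).edgeSet ↔ e ∈ G.edgeSet ∧ ω e = true := by
  induction e using Sym2.ind with
  | _ x y => exact (Iff.rfl : (percolate G ω).Adj x y ↔ _)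

def badSet (α β : ℝ) (d : ℕ) : Set (Sym2 (Fin d → Bool) → Bool) :=
  {ω | ∃ W : Set (Fin d → Bool),
    α * 2 ^ d ≤ (W.ncard : ℝ) ∧
    (({e ∈ (cubeGraph d).edgeSet | ∀ v ∈ e, v ∈ W}).ncard : ℝ) ≤
      β * d * (W.ncard : ℝ) ∧
    (W.ncard : ℝ) / 2 ≤
      (({e ∈ (percolate (cubeGraph d) ω).edgeSet | ∀ v ∈ e, v ∈ W}).ncard : ℝ)}

lemma key_bound (α β : ℝ) (hα : 0 < α) (hβpos : 0 < β) (M : ℕ) (hM : 2 / α ≤ (M : ℝ))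
    (hβe : 4 * β * Real.exp 1 = ((4 : ℝ)⁻¹) ^ M)
    (d : ℕ) (hd : 2 ≤ d) (p : ℝ) (hp0 : 0 ≤ p) (hp2 : p ≤ 2 / d) :
    cubeMeasure d p (badSet α β d) ≤ (2⁻¹ : ℝ≥0∞) ^ 2 ^ d := by
  classical
  have hd0 : (0 : ℝ) < d := by
    have : (2:ℝ) ≤ d := by exact_mod_cast hd
    linarith
  have hp1 : p ≤ 1 := hp2.trans (by rw [div_le_one hd0]; exact_mod_cast hd)
  set K0 : ℕ := ⌈α * 2 ^ d / 2⌉₊ with hK0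
  -- M * K0 ≥ 2 ^ d
  have hMK0 : 2 ^ d ≤ M * K0 := by
    have h2 : α * 2 ^ d / 2 ≤ (K0 : ℝ) := Nat.le_ceil _
    have hMnn : (0:ℝ) ≤ M := le_trans (by positivity) hM
    have hr : ((2 ^ d : ℕ) : ℝ) ≤ (M : ℝ) * K0 := by
      have hmul := mul_le_mul hM h2 (by positivity) hMnn
      calc ((2 ^ d : ℕ) : ℝ) = 2 / α * (α * 2 ^ d / 2) := by
            push_cast; field_simp
        _ ≤ (M : ℝ) * K0 := hmul
    exact_mod_cast hr
  have hinv1 : (4⁻¹ : ℝ≥0∞) ≤ 1 := by simp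
  -- per-W bound
  have perW : ∀ W : Finset (Fin d → Bool),
      cubeMeasure d p {ω | α * 2 ^ d ≤ (((W : Set (Fin d → Bool)).ncard : ℕ) : ℝ) ∧
        (({e ∈ (cubeGraph d).edgeSet | ∀ v ∈ e, v ∈ (W : Set (Fin d → Bool))}).ncard : ℝ) ≤
          β * d * ((W : Set (Fin d → Bool)).ncard : ℝ) ∧
        ((W : Set (Fin d → Bool)).ncard : ℝ) / 2 ≤
          (({e ∈ (percolate (cubeGraph d) ω).edgeSet |
              ∀ v ∈ e, v ∈ (W : Set (Fin d → Bool))}).ncard : ℝ)}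
        ≤ (4⁻¹ : ℝ≥0∞) ^ 2 ^ d := by
    intro W
    by_cases hW : α * 2 ^ d ≤ ((W : Set (Fin d → Bool)).ncard : ℝ) ∧
        (({e ∈ (cubeGraph d).edgeSet | ∀ v ∈ e, v ∈ (W : Set (Fin d → Bool))}).ncard : ℝ) ≤
          β * d * ((W : Set (Fin d → Bool)).ncard : ℝ)
    swap
    · have : {ω : Sym2 (Fin d → Bool) → Bool | α * 2 ^ d ≤ (((W : Set (Fin d → Bool)).ncard : ℕ) : ℝ) ∧
          (({e ∈ (cubeGraph d).edgeSet | ∀ v ∈ e, v ∈ (W : Set (Fin d → Bool))}).ncard : ℝ) ≤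
            β * d * ((W : Set (Fin d → Bool)).ncard : ℝ) ∧
          ((W : Set (Fin d → Bool)).ncard : ℝ) / 2 ≤
            (({e ∈ (percolate (cubeGraph d) ω).edgeSet |
                ∀ v ∈ e, v ∈ (W : Set (Fin d → Bool))}).ncard : ℝ)} = ∅ :=
        Set.eq_empty_iff_forall_notMem.2 fun ω h => hW ⟨h.1, h.2.1⟩
      rw [this, measure_empty]
      exact zero_le
    obtain ⟨h1, h2⟩ := hW
    rw [Set.ncard_coe_finset] at h1 h2
    set F : Finset (Sym2 (Fin d → Bool)) :=
      (Set.toFinite {e | e ∈ (cubeGraph d).edgeSet ∧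
        ∀ v ∈ e, v ∈ (W : Set (Fin d → Bool))}).toFinset with hF
    have hFcard : ({e ∈ (cubeGraph d).edgeSet | ∀ v ∈ e, v ∈ (W : Set (Fin d → Bool))}).ncard
        = F.card := Set.ncard_eq_toFinset_card _ _
    set k : ℕ := ⌈(W.card : ℝ) / 2⌉₊ with hk
    have hkK0 : K0 ≤ k := Nat.ceil_le_ceil (by gcongr)
    have hsub : {ω : Sym2 (Fin d → Bool) → Bool | α * 2 ^ d ≤ ((W.card : ℕ) : ℝ) ∧
          (({e ∈ (cubeGraph d).edgeSet | ∀ v ∈ e, v ∈ (W : Set (Fin d → Bool))}).ncard : ℝ) ≤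
            β * d * ((W : Set (Fin d → Bool)).ncard : ℝ) ∧
          ((W : Set (Fin d → Bool)).ncard : ℝ) / 2 ≤
            (({e ∈ (percolate (cubeGraph d) ω).edgeSet |
                ∀ v ∈ e, v ∈ (W : Set (Fin d → Bool))}).ncard : ℝ)}
        ⊆ {ω | k ≤ (F.filter (fun e => ω e = true)).card} := by
      rintro ω ⟨_, _, h3⟩
      have hcount : {e ∈ (percolate (cubeGraph d) ω).edgeSet |
          ∀ v ∈ e, v ∈ (W : Set (Fin d → Bool))}
          = ↑(F.filter (fun e => ω e = true)) := by
        ext e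
        simp only [Set.mem_setOf_eq, Finset.coe_filter, percolate_mem_edgeSet, hF,
          Set.Finite.mem_toFinset]
        tauto
      rw [Set.ncard_coe_finset, hcount, Set.ncard_coe_finset] at h3
      exact Nat.ceil_le.2 h3
    calc cubeMeasure d p _ ≤ cubeMeasure d p {ω | k ≤ (F.filter (fun e => ω e = true)).card} := by
          apply measure_mono
          convert hsub using 3
          rw [Set.ncard_coe_finset]
      _ ≤ (F.card.choose k : ℝ≥0∞) * ENNReal.ofReal p ^ k := union_bound hp1 F k
      _ = ENNReal.ofReal ((F.card.choose k : ℝ) * p ^ k) := by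
          rw [ENNReal.ofReal_mul (by positivity), ENNReal.ofReal_pow hp0,
            ENNReal.ofReal_natCast]
      _ ≤ ENNReal.ofReal ((4 * β * Real.exp 1) ^ k) := by
          apply ENNReal.ofReal_le_ofReal
          refine real_bound hp0 (by positivity) ?_
          have hkW : (W.card : ℝ) / 2 ≤ (k : ℝ) := Nat.le_ceil _
          have hm : (F.card : ℝ) ≤ β * d * W.card := by rwa [hFcard] at h2; 
          calc (F.card : ℝ) * p ≤ (β * d * W.card) * (2 / d) := by
                apply mul_le_mul hm hp2 hp0 (by positivity)
            _ = 2 * β * W.card := by field_simp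
            _ = 4 * β * ((W.card : ℝ) / 2) := by ring
            _ ≤ 4 * β * k := by
                apply mul_le_mul_of_nonneg_left hkW (by positivity)
      _ = (4⁻¹ : ℝ≥0∞) ^ (M * k) := by
          rw [hβe, ← pow_mul, ENNReal.ofReal_pow (by norm_num),
            ENNReal.ofReal_inv_of_pos (by norm_num)]
          norm_num
      _ ≤ (4⁻¹ : ℝ≥0∞) ^ 2 ^ d := by
          apply pow_le_pow_of_le_one zero_le hinv1
          calc 2 ^ d ≤ M * K0 := hMK0
            _ ≤ M * k := Nat.mul_le_mul_left M hkK0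
  -- union over all W
  have hcover : badSet α β d ⊆ ⋃ W : Finset (Fin d → Bool),
      {ω | α * 2 ^ d ≤ (((W : Set (Fin d → Bool)).ncard : ℕ) : ℝ) ∧
        (({e ∈ (cubeGraph d).edgeSet | ∀ v ∈ e, v ∈ (W : Set (Fin d → Bool))}).ncard : ℝ) ≤
          β * d * ((W : Set (Fin d → Bool)).ncard : ℝ) ∧
        ((W : Set (Fin d → Bool)).ncard : ℝ) / 2 ≤
          (({e ∈ (percolate (cubeGraph d) ω).edgeSet |
              ∀ v ∈ e, v ∈ (W : Set (Fin d → Bool))}).ncard : ℝ)} := by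
    rintro ω ⟨W, hW⟩
    refine Set.mem_iUnion.2 ⟨(Set.toFinite W).toFinset, ?_⟩
    rwa [Set.mem_setOf_eq, Set.Finite.coe_toFinset]
  calc cubeMeasure d p (badSet α β d)
      ≤ ∑' W : Finset (Fin d → Bool), cubeMeasure d p _ :=
        (measure_mono hcover).trans (measure_iUnion_le _)
    _ = ∑ W : Finset (Fin d → Bool), cubeMeasure d p _ := tsum_fintype _
    _ ≤ Fintype.card (Finset (Fin d → Bool)) • ((4⁻¹ : ℝ≥0∞) ^ 2 ^ d) :=
        Finset.sum_le_card_nsmul _ _ _ (fun W _ => perW W)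
    _ = (2 : ℝ≥0∞) ^ 2 ^ d * (4⁻¹ : ℝ≥0∞) ^ 2 ^ d := by
        rw [Fintype.card_finset, nsmul_eq_mul]
        congr 1
        simp [Fintype.card_fun]
    _ = (2⁻¹ : ℝ≥0∞) ^ 2 ^ d := by
        rw [← mul_pow]
        congr 1
        rw [show (4 : ℝ≥0∞) = 2 * 2 by norm_num,
          ENNReal.mul_inv (Or.inl two_ne_zero) (Or.inl ENNReal.ofNat_ne_top), ← mul_assoc,
          ENNReal.mul_inv_cancel two_ne_zero ENNReal.ofNat_ne_top, one_mul]


/-- for every `α > 0` there is `β > 0` such that, for any edge probabilities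
`0 ≤ q_d ≤ 2/d`, whp there is no vertex set `W` of at least `α n` vertices spanning at most
`β d |W|` edges of `Q^d` and at least `|W|/2` edges of `Q^d_{q_d}`. -/
theorem no_sparse_dense_set (α : ℝ) (hα : 0 < α) :
    ∃ β : ℝ, 0 < β ∧ ∀ q : ℕ → ℝ, (∀ d, 0 ≤ q d) → (∀ d : ℕ, q d ≤ 2 / d) →
      Tendsto (fun d : ℕ =>
          cubeMeasure d (q d)
            {ω | ¬ ∃ W : Set (Fin d → Bool),
              α * 2 ^ d ≤ (W.ncard : ℝ) ∧
              (({e ∈ (cubeGraph d).edgeSet | ∀ v ∈ e, v ∈ W}).ncard : ℝ) ≤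
                β * d * (W.ncard : ℝ) ∧
              (W.ncard : ℝ) / 2 ≤
                (({e ∈ (percolate (cubeGraph d) ω).edgeSet | ∀ v ∈ e, v ∈ W}).ncard : ℝ)})
        atTop (nhds 1) := by
  classical
  set M : ℕ := ⌈2 / α⌉₊ with hMdef
  set β : ℝ := ((4 : ℝ)⁻¹) ^ M / (4 * Real.exp 1) with hβdef
  have hβpos : 0 < β := by positivity
  refine ⟨β, hβpos, ?_⟩
  intro q hq0 hq2
  have hβe : 4 * β * Real.exp 1 = ((4 : ℝ)⁻¹) ^ M := by
    rw [hβdef]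
    field_simp
  have hM : 2 / α ≤ (M : ℝ) := Nat.le_ceil _
  haveI : ∀ d, IsProbabilityMeasure (cubeMeasure d (q d)) := fun d => by
    unfold cubeMeasure; infer_instance
  have hcompl : ∀ d : ℕ, ∀ ω : Sym2 (Fin d → Bool) → Bool,
      (¬ ∃ W : Set (Fin d → Bool),
        α * 2 ^ d ≤ (W.ncard : ℝ) ∧
        (({e ∈ (cubeGraph d).edgeSet | ∀ v ∈ e, v ∈ W}).ncard : ℝ) ≤
          β * d * (W.ncard : ℝ) ∧
        (W.ncard : ℝ) / 2 ≤
          (({e ∈ (percolate (cubeGraph d) ω).edgeSet | ∀ v ∈ e, v ∈ W}).ncard : ℝ)) ↔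
      ω ∈ (badSet α β d)ᶜ := fun d ω => Iff.rfl
  have lower : ∀ᶠ d : ℕ in atTop,
      1 - (2⁻¹ : ℝ≥0∞) ^ 2 ^ d ≤ cubeMeasure d (q d)
        {ω | ¬ ∃ W : Set (Fin d → Bool),
          α * 2 ^ d ≤ (W.ncard : ℝ) ∧
          (({e ∈ (cubeGraph d).edgeSet | ∀ v ∈ e, v ∈ W}).ncard : ℝ) ≤
            β * d * (W.ncard : ℝ) ∧
          (W.ncard : ℝ) / 2 ≤
            (({e ∈ (percolate (cubeGraph d) ω).edgeSet | ∀ v ∈ e, v ∈ W}).ncard : ℝ)} := by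
    filter_upwards [eventually_ge_atTop 2] with d hd
    have hb := key_bound α β hα hβpos M hM hβe d hd (q d) (hq0 d) (hq2 d)
    have hset : {ω : Sym2 (Fin d → Bool) → Bool | ¬ ∃ W : Set (Fin d → Bool),
        α * 2 ^ d ≤ (W.ncard : ℝ) ∧
        (({e ∈ (cubeGraph d).edgeSet | ∀ v ∈ e, v ∈ W}).ncard : ℝ) ≤
          β * d * (W.ncard : ℝ) ∧
        (W.ncard : ℝ) / 2 ≤
          (({e ∈ (percolate (cubeGraph d) ω).edgeSet | ∀ v ∈ e, v ∈ W}).ncard : ℝ)}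
        = (badSet α β d)ᶜ := rfl
    rw [hset, measure_compl (MeasurableSet.of_discrete) (measure_ne_top _ _), measure_univ]
    exact tsub_le_tsub_left hb 1
  have upper : ∀ d : ℕ, cubeMeasure d (q d)
      {ω | ¬ ∃ W : Set (Fin d → Bool),
        α * 2 ^ d ≤ (W.ncard : ℝ) ∧
        (({e ∈ (cubeGraph d).edgeSet | ∀ v ∈ e, v ∈ W}).ncard : ℝ) ≤
          β * d * (W.ncard : ℝ) ∧
        (W.ncard : ℝ) / 2 ≤
          (({e ∈ (percolate (cubeGraph d) ω).edgeSet | ∀ v ∈ e, v ∈ W}).ncard : ℝ)} ≤ 1 :=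
    fun d => prob_le_one
  have h0 : Tendsto (fun d : ℕ => (2⁻¹ : ℝ≥0∞) ^ 2 ^ d) atTop (nhds 0) := by
    have h1 : Tendsto (fun n : ℕ => (2⁻¹ : ℝ≥0∞) ^ n) atTop (nhds 0) :=
      ENNReal.tendsto_pow_atTop_nhds_zero_of_lt_one (by norm_num)
    have h2 : Tendsto (fun d : ℕ => 2 ^ d) atTop atTop :=
      tendsto_pow_atTop_atTop_of_one_lt one_lt_two
    exact h1.comp h2
  have hlo : Tendsto (fun d : ℕ => 1 - (2⁻¹ : ℝ≥0∞) ^ 2 ^ d) atTop (nhds 1) := by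
    have := ENNReal.Tendsto.sub (tendsto_const_nhds (x := (1 : ℝ≥0∞))) h0
      (Or.inl ENNReal.one_ne_top)
    simpa using this
  exact tendsto_of_tendsto_of_tendsto_of_le_of_le' hlo tendsto_const_nhds lower
    (Eventually.of_forall upper)

end
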